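/- Let A and B be p x p real symmetric positive definite matrices and v in R^p. Then tr(A^{-1} B) + v^T A^{-1} v - p + log det( A B^{-1} ) >= v^T ( I_p + A )^{-1} v. In particular, twice the Kullback-Leibler divergence between two p-dimensional Gaussian distributions with mean difference v, where A is the covariance of the reference (denominator) distribution and B that of the other, is at least v^T ( I_p + A )^{-1} v. -/

import Mathlib

open Matrix

noncomputable section

lemma trace_eq_sum_eigenvalues' {p : ℕ} {C : Matrix (Fin p) (Fin p) ℝ} (hC : C.IsHermitian) :
    C.trace = ∑ i, hC.eigenvalues i := by
  conv_lhs => rw [hC.spectral_theorem, Unitary.conjStarAlgAut_apply]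
  rw [trace_mul_cycle]
  rw [show (star (hC.eigenvectorUnitary : Matrix (Fin p) (Fin p) ℝ)) *
      (hC.eigenvectorUnitary : Matrix (Fin p) (Fin p) ℝ) = 1 from
    Unitary.coe_star_mul_self hC.eigenvectorUnitary, one_mul, trace_diagonal]
  simp

lemma key_trace_log' {p : ℕ} {C : Matrix (Fin p) (Fin p) ℝ} (hC : C.PosDef) :
    (p : ℝ) + Real.log C.det ≤ C.trace := by
  have hdet : C.det = ∏ i, hC.1.eigenvalues i := by
    simpa using hC.1.det_eq_prod_eigenvalues
  have hlog : Real.log C.det = ∑ i, Real.log (hC.1.eigenvalues i) := by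
    rw [hdet, Real.log_prod (fun i _ => (hC.eigenvalues_pos i).ne')]
  rw [hlog, trace_eq_sum_eigenvalues' hC.1]
  have hp : (p : ℝ) = ∑ _i : Fin p, (1 : ℝ) := by simp
  rw [hp, ← Finset.sum_add_distrib]
  refine Finset.sum_le_sum fun i _ => ?_
  have := Real.log_le_sub_one_of_pos (hC.eigenvalues_pos i)
  linarith

lemma posdef_conj' {p : ℕ} {M N : Matrix (Fin p) (Fin p) ℝ} (hM : M.PosDef)
    (hN : N.IsHermitian) (hNu : IsUnit N.det) : (N * M * N).PosDef := by
  refine Matrix.PosDef.of_dotProduct_mulVec_pos ?_ ?_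
  · rw [Matrix.IsHermitian, conjTranspose_mul, conjTranspose_mul, hM.1, hN, mul_assoc]
  · intro x hx
    have hinj := Matrix.mulVec_injective_iff_isUnit.mpr ((Matrix.isUnit_iff_isUnit_det N).mpr hNu)
    have hNx : N *ᵥ x ≠ 0 := fun h => hx (hinj (by simpa using h))
    have hrw : star x ⬝ᵥ ((N * M * N) *ᵥ x) = star (N *ᵥ x) ⬝ᵥ (M *ᵥ (N *ᵥ x)) := by
      rw [← mulVec_mulVec, ← mulVec_mulVec, star_mulVec, dotProduct_mulVec]
      congr 1
      rw [hN]
    rw [hrw]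
    exact hM.dotProduct_mulVec_pos hNx


/-- The Kullback–Leibler divergence `KL_{k,k'}` of `N(μk, Sk)` with respect to `N(μk', Sk')`. -/
def klDiv {n : Type*} [Fintype n] [DecidableEq n] (μk μk' : n → ℝ)
    (Sk Sk' : Matrix n n ℝ) : ℝ :=
  (1 / 2) * ((Sk'⁻¹ * Sk).trace + ((μk - μk') ⬝ᵥ (Sk'⁻¹ *ᵥ (μk - μk')))
    - (Fintype.card n : ℝ) + Real.log (Sk' * Sk⁻¹).det)

/-- For `p × p` symmetric positive definite `A, B` and `v ∈ ℝ^p`: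
`tr(A⁻¹ B) + vᵀ A⁻¹ v - p + log det(A B⁻¹) ≥ vᵀ (I + A)⁻¹ v`. In particular, twice the KL
divergence between two Gaussians with mean difference `v`, where `A` is the covariance of the
reference (denominator) distribution and `B` that of the other, is at least `vᵀ (I + A)⁻¹ v`. -/
theorem kl_lower_bound
    (p : ℕ) (A B : Matrix (Fin p) (Fin p) ℝ) (hA : A.PosDef) (hB : B.PosDef)
    (v : Fin p → ℝ) :
    v ⬝ᵥ ((1 + A)⁻¹ *ᵥ v) ≤
      (A⁻¹ * B).trace + (v ⬝ᵥ (A⁻¹ *ᵥ v)) - (p : ℝ) + Real.log (A * B⁻¹).det ∧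
    ∀ μk μk' : Fin p → ℝ, μk - μk' = v →
      v ⬝ᵥ ((1 + A)⁻¹ *ᵥ v) ≤ 2 * klDiv μk μk' B A := by
  -- setup sqrt
  open scoped MatrixOrder in set S := CFC.sqrt A with hSdef
  open scoped MatrixOrder in have hS : S.PosSemidef := Matrix.nonneg_iff_posSemidef.mp (CFC.sqrt_nonneg A)
  open scoped MatrixOrder in have hSS : S * S = A := CFC.sqrt_mul_sqrt_self A (Matrix.nonneg_iff_posSemidef.mpr hA.posSemidef)
  have hdetS : S.det * S.det = A.det := by rw [← det_mul, hSS]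
  have hdetS0 : S.det ≠ 0 := by
    intro h
    rw [h, mul_zero] at hdetS
    exact hA.det_pos.ne' hdetS.symm
  have hdetSinv : (S⁻¹).det = (S.det)⁻¹ := by
    rw [Matrix.det_nonsing_inv, Ring.inverse_eq_inv']
  have hSinvU : IsUnit (S⁻¹).det := by
    rw [hdetSinv]
    exact (isUnit_iff_ne_zero.mpr (inv_ne_zero hdetS0))
  have hSinvH : (S⁻¹).IsHermitian := hS.1.inv
  set C := S⁻¹ * B * S⁻¹ with hCdef
  have hC : C.PosDef := posdef_conj' hB hSinvH hSinvU
  -- trace identity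
  have hAinv : A⁻¹ = S⁻¹ * S⁻¹ := by rw [← hSS, Matrix.mul_inv_rev]
  have htr : (A⁻¹ * B).trace = C.trace := by
    rw [hAinv, hCdef]
    exact (trace_mul_cycle S⁻¹ B S⁻¹).symm
  -- det identity
  have hdetB0 : B.det ≠ 0 := hB.det_pos.ne'
  have hdetBinv : (B⁻¹).det = (B.det)⁻¹ := by
    rw [Matrix.det_nonsing_inv, Ring.inverse_eq_inv']
  have hdetC : C.det = B.det / A.det := by
    rw [hCdef, det_mul, det_mul, hdetSinv, ← hdetS]
    field_simp
  have hdetAB : (A * B⁻¹).det = (C.det)⁻¹ := by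
    rw [det_mul, hdetBinv, hdetC]
    field_simp
  have hlogAB : Real.log (A * B⁻¹).det = - Real.log C.det := by
    rw [hdetAB, Real.log_inv]
  have hkey : (0:ℝ) ≤ (A⁻¹ * B).trace - (p : ℝ) + Real.log (A * B⁻¹).det := by
    have := key_trace_log' hC
    rw [htr, hlogAB]
    linarith
  -- quadratic form inequality
  have h1A : (1 + A).PosDef := Matrix.PosDef.one.add hA
  have hAA : (A * A).PosSemidef := by
    have := posSemidef_conjTranspose_mul_self A
    rwa [hA.1] at this
  have hfacP : ((1 + A) * A).PosDef := by
    rw [add_mul, one_mul]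
    exact hA.add_posSemidef hAA
  have hinvdiff : A⁻¹ - (1 + A)⁻¹ = ((1 + A) * A)⁻¹ := by
    rw [Matrix.mul_inv_rev]
    have e1 : A⁻¹ * ((1 + A) - A) * (1 + A)⁻¹ = A⁻¹ * (1 + A)⁻¹ := by
      rw [add_sub_cancel_right, mul_one]
    rw [← e1, mul_sub, sub_mul, mul_assoc,
      Matrix.mul_nonsing_inv _ (isUnit_iff_ne_zero.mpr h1A.det_pos.ne'), mul_one,
      Matrix.nonsing_inv_mul _ (isUnit_iff_ne_zero.mpr hA.det_pos.ne'), one_mul]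
  have hq : v ⬝ᵥ (A⁻¹ *ᵥ v) - v ⬝ᵥ ((1 + A)⁻¹ *ᵥ v) = v ⬝ᵥ (((1 + A) * A)⁻¹ *ᵥ v) := by
    rw [← hinvdiff, Matrix.sub_mulVec, dotProduct_sub]
  have hpos : (0:ℝ) ≤ v ⬝ᵥ (((1 + A) * A)⁻¹ *ᵥ v) := by
    have := hfacP.inv.posSemidef.dotProduct_mulVec_nonneg v
    simpa using this
  have hmain : v ⬝ᵥ ((1 + A)⁻¹ *ᵥ v) ≤
      (A⁻¹ * B).trace + (v ⬝ᵥ (A⁻¹ *ᵥ v)) - (p : ℝ) + Real.log (A * B⁻¹).det := by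
    linarith
  refine ⟨hmain, fun μk μk' h => ?_⟩
  have h2 : 2 * klDiv μk μk' B A =
      (A⁻¹ * B).trace + (v ⬝ᵥ (A⁻¹ *ᵥ v)) - (p : ℝ) + Real.log (A * B⁻¹).det := by
    simp only [klDiv, h, Fintype.card_fin]
    ring
  rw [h2]
  exact hmain

end
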